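/- (LLC in ℓ_{∞,2}-norm from nonsingular parametrization of cliques.) Let i ∈ V, assume max_σ |g_{ik}(σ)| ≤ 1 for all k ∈ K_i, |A_j| ≤ q for all j ∈ V, |∂k| ≤ L for all k ∈ K with L ≥ 1, and let γ be the maximum interaction strength. Let X_i ⊆ ℝ^{K_i}, and suppose there is ρ > 0 such that for every maximal clique c ∈ MaxCli with i ∈ c and every x ∈ X_i: Σ_{a∈A_i} μ_i(a) · Σ_{τ} (Σ_{k∈span(c)} x_k h_k(σ(a,τ)))² ≥ ρ · Σ_{k∈span(c)} x_k², where μ_i is the marginal law of the i-th coordinate under μ, τ ranges over all assignments of the coordinates in c∖{i}, and σ(a,τ) is any configuration whose i-th coordinate is a and whose coordinates on c∖{i} are given by τ (h_k depends only on coordinates in c = ∂k). Then for every x ∈ X_i: E_μ[(Σ_{k∈K_i} x_k g_{ik}(σ))²] ≥ ρ · (exp(−2γ)/q)^{L−1} · max_{c∈MaxCli, c∋i} Σ_{k∈span(c)} x_k². -/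

import Mathlib

open Finset

/-- The locally centered basis function
`g_{ik}(σ) = f_k(σ) − (1/|A_i|) Σ_{a∈A_i} f_k(σ[i:=a])`. -/
noncomputable def locg {V : Type*} [DecidableEq V] (A : V → Type*) [∀ i, Fintype (A i)]
    {K : Type*} (f : K → (∀ i, A i) → ℝ) (i : V) (k : K) (σ : ∀ j, A j) : ℝ :=
  f k σ - (1 / (Fintype.card (A i) : ℝ)) * ∑ a : A i, f k (Function.update σ i a)

/-- The set of factors `K_i = {k ∈ K : i ∈ ∂k}` whose neighborhood contains `i`. -/
def Kat {V K : Type*} [Fintype K] [DecidableEq V] (nbr : K → Finset V) (i : V) : Finset K :=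
  Finset.univ.filter (fun k => i ∈ nbr k)

/-- `assignOn r τ σ` is the configuration `σ[r:=τ]` that agrees with `τ` on the
coordinates in the finite set `r` and with `σ` elsewhere. -/
def assignOn {V : Type*} [DecidableEq V] {A : V → Type*} (r : Finset V)
    (τ : ∀ j : {x // x ∈ r}, A j.1) (σ : ∀ j, A j) : ∀ j, A j :=
  fun j => if h : j ∈ r then τ ⟨j, h⟩ else σ j

/-- The globally centered basis function of factor `k`, defined by inclusion–exclusion:
`h_k(σ) = f_k(σ) + Σ_{∅ ≠ r ⊆ ∂k} ((−1)^{|r|}/Π_{j∈r}|A_j|) Σ_{τ∈Π_{j∈r}A_j} f_k(σ[r:=τ])`. -/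
noncomputable def globh {V : Type*} [Fintype V] [DecidableEq V] (A : V → Type*)
    [∀ i, Fintype (A i)] {K : Type*} (nbr : K → Finset V) (f : K → (∀ i, A i) → ℝ)
    (k : K) (σ : ∀ j, A j) : ℝ :=
  f k σ + ∑ r ∈ (nbr k).powerset.erase ∅,
    ((-1 : ℝ) ^ r.card / ∏ j ∈ r, (Fintype.card (A j) : ℝ)) *
      ∑ τ : ∀ j : {x // x ∈ r}, A j.1, f k (assignOn r τ σ)

/-- The set of maximal factors: factors whose neighborhood is not strictly contained in
the neighborhood of another factor. -/
def MaxFac {V K : Type*} [Fintype K] [DecidableEq V] (nbr : K → Finset V) : Finset K :=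
  Finset.univ.filter (fun k => ¬ ∃ k', nbr k ⊂ nbr k')

/-- The set of maximal cliques: neighborhoods of maximal factors. -/
def MaxCli {V K : Type*} [Fintype K] [DecidableEq V] (nbr : K → Finset V) :
    Finset (Finset V) :=
  (MaxFac nbr).image nbr

/-- The span of a clique `c`: the maximal factors whose neighborhood equals `c`. -/
def cspan {V K : Type*} [Fintype K] [DecidableEq V] (nbr : K → Finset V) (c : Finset V) :
    Finset K :=
  (MaxFac nbr).filter (fun k => nbr k = c)


open Function

section Aux
variable {V : Type*} [Fintype V] [DecidableEq V] {A : V → Type*}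
  [∀ i, Fintype (A i)] [∀ i, DecidableEq (A i)]

/-- constrained sum over configurations -/
noncomputable def SR (r : Finset V) (F : (∀ j, A j) → ℝ) (σ : ∀ j, A j) : ℝ :=
  ∑ σ' : ∀ j, A j, if (∀ l, l ∉ r → σ' l = σ l) then F σ' else 0

lemma sum_assignOn (r : Finset V) (σ : ∀ j, A j) (F : (∀ j, A j) → ℝ) :
    ∑ τ : ∀ l : {x // x ∈ r}, A l.1, F (assignOn r τ σ) = SR r F σ := by
  rw [SR, ← Finset.sum_filter]
  refine Finset.sum_bij' (fun τ _ => assignOn r τ σ) (fun σ' _ => fun l => σ' l.1)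
    ?_ ?_ ?_ ?_ ?_
  · intro τ _
    simp only [Finset.mem_filter, Finset.mem_univ, true_and]
    intro l hl
    simp [assignOn, hl]
  · intro σ' _; exact Finset.mem_univ _
  · intro τ _
    funext l
    rcases l with ⟨l, hl⟩
    simp [assignOn, hl]
  · intro σ' hσ'
    simp only [Finset.mem_filter, Finset.mem_univ, true_and] at hσ'
    funext l
    by_cases hl : l ∈ r
    · simp [assignOn, hl]
    · simp [assignOn, hl, hσ' l hl]
  · intro τ _; rfl

lemma SR_empty (F : (∀ j, A j) → ℝ) (σ : ∀ j, A j) : SR (∅ : Finset V) F σ = F σ := by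
  rw [SR]
  have : ∀ σ' : ∀ j, A j, (∀ l, l ∉ (∅ : Finset V) → σ' l = σ l) ↔ σ' = σ := by
    intro σ'
    constructor
    · intro h; funext l; exact h l (Finset.notMem_empty l)
    · intro h l _; rw [h]
  rw [Finset.sum_congr rfl fun σ' _ => if_congr (this σ') rfl rfl]
  simp

lemma SR_update_mem {r : Finset V} {j : V} (hj : j ∈ r) (F : (∀ j, A j) → ℝ)
    (σ : ∀ j, A j) (b : A j) : SR r F (Function.update σ j b) = SR r F σ := by
  rw [SR, SR]
  refine Finset.sum_congr rfl fun σ' _ => if_congr ?_ rfl rfl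
  constructor
  · intro h l hl
    rw [h l hl, Function.update_of_ne (by rintro rfl; exact hl hj)]
  · intro h l hl
    rw [h l hl, Function.update_of_ne (by rintro rfl; exact hl hj)]

lemma SR_split {r : Finset V} {j : V} (hj : j ∉ r) (F : (∀ j, A j) → ℝ)
    (σ : ∀ j, A j) :
    ∑ b : A j, SR r F (Function.update σ j b) = SR (insert j r) F σ := by
  simp only [SR]
  rw [Finset.sum_comm]
  refine Finset.sum_congr rfl fun σ' _ => ?_
  have key : ∀ b : A j, (∀ l, l ∉ r → σ' l = Function.update σ j b l) ↔
      (σ' j = b ∧ ∀ l, l ∉ insert j r → σ' l = σ l) := by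
    intro b
    constructor
    · intro h
      refine ⟨by simpa using h j hj, fun l hl => ?_⟩
      have hlj : l ≠ j := fun h' => hl (h' ▸ Finset.mem_insert_self j r)
      have hlr : l ∉ r := fun h' => hl (Finset.mem_insert_of_mem h')
      rw [h l hlr, Function.update_of_ne hlj]
    · rintro ⟨h1, h2⟩ l hl
      by_cases hlj : l = j
      · subst hlj; simpa using h1
      · rw [h2 l (by simp [hlj, hl]), Function.update_of_ne hlj]
  rw [Finset.sum_congr rfl fun b _ => if_congr (key b) rfl rfl]
  have : ∀ b : A j, (if σ' j = b ∧ (∀ l, l ∉ insert j r → σ' l = σ l) then F σ' else 0)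
      = if σ' j = b then (if (∀ l, l ∉ insert j r → σ' l = σ l) then F σ' else 0) else 0 := by
    intro b; by_cases h1 : σ' j = b <;> by_cases h2 : (∀ l, l ∉ insert j r → σ' l = σ l) <;>
      simp [h1, h2]
  rw [Finset.sum_congr rfl fun b _ => this b]
  rw [Finset.sum_ite_eq]
  simp

lemma sum_update_eq_SR_singleton (j : V) (F : (∀ j, A j) → ℝ) (σ : ∀ j, A j) :
    ∑ b : A j, F (Function.update σ j b) = SR ({j} : Finset V) F σ := by
  have h := SR_split (Finset.notMem_empty j) F σ
  simp only [SR_empty] at h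
  simpa using h

end Aux
set_option linter.unusedSectionVars false

section Aux2
variable {V : Type*} [Fintype V] [DecidableEq V] {A : V → Type*}
  [∀ i, Fintype (A i)] [∀ i, DecidableEq (A i)] [∀ i, Nonempty (A i)]
  {K : Type*} [Fintype K]

noncomputable def coefR (r : Finset V) : ℝ :=
  (-1 : ℝ) ^ r.card / ∏ j ∈ r, (Fintype.card (A j) : ℝ)

lemma prodCard_pos (r : Finset V) : (0:ℝ) < ∏ j ∈ r, (Fintype.card (A j) : ℝ) :=
  Finset.prod_pos fun j _ => by positivity

lemma globh_eq_sum_SR (nbr : K → Finset V) (f : K → (∀ i, A i) → ℝ) (k : K)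
    (σ : ∀ j, A j) :
    globh A nbr f k σ = ∑ r ∈ (nbr k).powerset, coefR (A := A) r * SR r (f k) σ := by
  rw [globh]
  rw [← Finset.add_sum_erase _ _ (Finset.empty_mem_powerset (nbr k))]
  rw [show coefR (A := A) (∅ : Finset V) * SR ∅ (f k) σ = f k σ by
    simp [coefR, SR_empty]]
  congr 1
  refine Finset.sum_congr rfl fun r _ => ?_
  rw [sum_assignOn, coefR]

lemma sum_globh_update {nbr : K → Finset V} {f : K → (∀ i, A i) → ℝ} {k : K} {j : V}
    (hj : j ∈ nbr k) (σ : ∀ j, A j) :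
    ∑ b : A j, globh A nbr f k (Function.update σ j b) = 0 := by
  have hAj : (0:ℝ) < (Fintype.card (A j) : ℝ) := by positivity
  simp only [globh_eq_sum_SR]
  rw [Finset.sum_comm]
  have hrw : ∀ r ∈ (nbr k).powerset,
      ∑ b : A j, coefR (A := A) r * SR r (f k) (Function.update σ j b)
      = coefR (A := A) r * ∑ b : A j, SR r (f k) (Function.update σ j b) := by
    intro r _; rw [Finset.mul_sum]
  rw [Finset.sum_congr rfl hrw]
  have hins : nbr k = insert j ((nbr k).erase j) := (Finset.insert_erase hj).symm
  rw [hins, Finset.sum_powerset_insert (Finset.notMem_erase j (nbr k))]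
  rw [← Finset.sum_add_distrib]
  refine Finset.sum_eq_zero fun r hr => ?_
  have hjr : j ∉ r := fun h =>
    Finset.notMem_erase j (nbr k) (Finset.mem_powerset.mp hr h)
  rw [SR_split hjr]
  have h2 : ∑ b : A j, SR (insert j r) (f k) (Function.update σ j b)
      = (Fintype.card (A j) : ℝ) * SR (insert j r) (f k) σ := by
    rw [Finset.sum_congr rfl fun b _ =>
      SR_update_mem (Finset.mem_insert_self j r) (f k) σ b]
    rw [Finset.sum_const, nsmul_eq_mul, Fintype.card]
  rw [h2]
  have hc : coefR (A := A) (insert j r) =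
      -coefR (A := A) r / (Fintype.card (A j) : ℝ) := by
    rw [coefR, coefR, Finset.card_insert_of_notMem hjr, Finset.prod_insert hjr]
    rw [pow_succ]
    have := (prodCard_pos (A := A) r).ne'
    field_simp
  rw [hc]
  field_simp
  ring

lemma locg_eq (f : K → (∀ i, A i) → ℝ) (i : V) (k : K) (σ : ∀ j, A j) :
    locg A f i k σ = f k σ + coefR (A := A) ({i} : Finset V) * SR ({i} : Finset V) (f k) σ := by
  rw [locg, sum_update_eq_SR_singleton, coefR]
  simp
  ring

end Aux2
section Aux3
variable {V : Type*} [Fintype V] [DecidableEq V] {A : V → Type*}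
  [∀ i, Fintype (A i)] [∀ i, DecidableEq (A i)] [∀ i, Nonempty (A i)]
  {K : Type*} [Fintype K]

/-- split off coordinate `j ∈ s` from a constrained sum -/
lemma SR_coord_split {s : Finset V} {j : V} (hj : j ∈ s) (Y : (∀ l, A l) → ℝ)
    (σ : ∀ l, A l) :
    (∑ σ' : ∀ l, A l, if (∀ l, l ∉ s → σ' l = σ l) then Y σ' else 0)
    = ∑ σ'' : ∀ l, A l, if ((∀ l, l ∉ s → σ'' l = σ l) ∧ σ'' j = σ j) then
        (∑ b : A j, Y (Function.update σ'' j b)) else 0 := by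
  rw [← Finset.sum_filter, ← Finset.sum_filter]
  rw [← Finset.sum_product' (s := Finset.univ.filter
        (fun σ'' => (∀ l, l ∉ s → σ'' l = σ l) ∧ σ'' j = σ j)) (t := Finset.univ)
        (f := fun σ'' b => Y (Function.update σ'' j b))]
  refine Finset.sum_bij' (fun σ' _ => (Function.update σ' j (σ j), σ' j))
    (fun p _ => Function.update p.1 j p.2) ?_ ?_ ?_ ?_ ?_
  · intro σ' hσ'
    simp only [Finset.mem_filter, Finset.mem_univ, true_and] at hσ'
    simp only [Finset.mem_product, Finset.mem_filter, Finset.mem_univ, true_and]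
    refine ⟨⟨fun l hl => ?_, by simp⟩, trivial⟩
    have hlj : l ≠ j := by rintro rfl; exact hl hj
    rw [Function.update_of_ne hlj]; exact hσ' l hl
  · intro p hp
    simp only [Finset.mem_product, Finset.mem_filter, Finset.mem_univ, true_and] at hp
    simp only [Finset.mem_filter, Finset.mem_univ, true_and]
    intro l hl
    have hlj : l ≠ j := by rintro rfl; exact hl hj
    rw [Function.update_of_ne hlj]; exact hp.1.1 l hl
  · intro σ' _
    simp [Function.update_idem]
  · intro p hp
    simp only [Finset.mem_product, Finset.mem_filter, Finset.mem_univ, true_and] at hp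
    ext l
    · simp only [Function.update_idem]
      rw [show Function.update p.1 j (σ j) = p.1 by
        rw [← hp.1.2]; exact Function.update_eq_self j p.1]
    · simp
  · intro σ' hσ'
    simp only [Finset.mem_filter, Finset.mem_univ, true_and] at hσ'
    simp [Function.update_idem]

/-- orthogonality: a function not depending on coordinate `j` is orthogonal to `globh k`
under the constrained sum, when `j` is free (`j ∈ s`) and `j ∈ nbr k`. -/
lemma SR_orth {nbr : K → Finset V} {f : K → (∀ i, A i) → ℝ} {k : K}
    {s : Finset V} {j : V} (hjs : j ∈ s) (hjk : j ∈ nbr k)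
    (u : (∀ l, A l) → ℝ) (hu : ∀ ς (b : A j), u (Function.update ς j b) = u ς)
    (σ : ∀ l, A l) :
    (∑ σ' : ∀ l, A l, if (∀ l, l ∉ s → σ' l = σ l) then u σ' * globh A nbr f k σ' else 0)
    = 0 := by
  rw [SR_coord_split hjs]
  refine Finset.sum_eq_zero fun σ'' _ => ?_
  split
  · rw [Finset.sum_congr rfl (fun b _ => by rw [hu])]
    rw [← Finset.mul_sum, sum_globh_update hjk, mul_zero]
  · rfl

/-- locality of globh -/
lemma globh_local {nbr : K → Finset V} {f : K → (∀ i, A i) → ℝ}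
    (hloc : ∀ k (σ τ : ∀ i, A i), (∀ i ∈ nbr k, σ i = τ i) → f k σ = f k τ)
    (k : K) (σ τ : ∀ i, A i) (h : ∀ i ∈ nbr k, σ i = τ i) :
    globh A nbr f k σ = globh A nbr f k τ := by
  rw [globh, globh, hloc k σ τ h]
  congr 1
  refine Finset.sum_congr rfl fun r hr => ?_
  have hrs : r ⊆ nbr k := Finset.mem_powerset.mp (Finset.mem_of_mem_erase hr)
  congr 1
  refine Finset.sum_congr rfl fun τ' _ => ?_
  refine hloc k _ _ fun l hl => ?_
  by_cases h' : l ∈ r <;> simp [assignOn, h', h l hl]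

/-- counting: the number of configurations agreeing with σ off s -/
lemma SR_count (s : Finset V) (σ : ∀ l, A l) :
    (∑ σ' : ∀ l, A l, if (∀ l, l ∉ s → σ' l = σ l) then (1:ℝ) else 0)
    = (Fintype.card (∀ l : {x // x ∈ s}, A l.1) : ℝ) := by
  rw [show (∑ σ' : ∀ l, A l, if (∀ l, l ∉ s → σ' l = σ l) then (1:ℝ) else 0)
      = SR s (fun _ => (1:ℝ)) σ from rfl]
  rw [← sum_assignOn]
  rw [Finset.sum_const, Finset.card_univ, nsmul_eq_mul, mul_one]

end Aux3
section Aux4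
variable {V : Type*} [Fintype V] [DecidableEq V] {A : V → Type*}
  [∀ i, Fintype (A i)] [∀ i, DecidableEq (A i)] [∀ i, Nonempty (A i)]
  {K : Type*} [Fintype K]

def Kat' {K : Type*} [Fintype K] (nbr : K → Finset V) (i : V) : Finset K :=
  Finset.univ.filter (fun k => i ∈ nbr k)

lemma theta_update_le {nbr : K → Finset V} {f : K → (∀ i, A i) → ℝ}
    (hloc : ∀ k (σ τ : ∀ i, A i), (∀ i ∈ nbr k, σ i = τ i) → f k σ = f k τ)
    {θ : K → ℝ} {γ : ℝ}
    (hγ : ∀ (j : V) (σ : ∀ l, A l), |∑ k ∈ Kat' nbr j, θ k * locg A f j k σ| ≤ γ)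
    (σ : ∀ l, A l) (j : V) (b : A j) :
    ∑ k, θ k * f k (Function.update σ j b) ≤ 2*γ + ∑ k, θ k * f k σ := by
  have key : ∑ k, (θ k * f k (Function.update σ j b) - θ k * f k σ)
      = ∑ k ∈ Kat' nbr j, (θ k * f k (Function.update σ j b) - θ k * f k σ) := by
    refine (Finset.sum_filter_of_ne fun k _ hne => ?_).symm
    by_contra hj
    have : f k (Function.update σ j b) = f k σ := by
      refine hloc k _ _ fun l hl => Function.update_of_ne (by rintro rfl; exact hj hl) _ _
    rw [this] at hne
    simp at hne
  have hlg : ∀ k, θ k * f k (Function.update σ j b) - θ k * f k σ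
      = θ k * locg A f j k (Function.update σ j b) - θ k * locg A f j k σ := by
    intro k
    have : locg A f j k (Function.update σ j b)
        = f k (Function.update σ j b) - (1 / (Fintype.card (A j) : ℝ)) *
          ∑ a : A j, f k (Function.update σ j a) := by
      rw [locg]
      congr 2
      refine Finset.sum_congr rfl fun a _ => ?_
      rw [Function.update_idem]
    rw [this, locg]
    ring
  have h1 := hγ j (Function.update σ j b)
  have h2 := hγ j σ
  rw [abs_le] at h1 h2
  have : ∑ k, θ k * f k (Function.update σ j b) - ∑ k, θ k * f k σ ≤ 2*γ := by
    rw [← Finset.sum_sub_distrib, key, Finset.sum_congr rfl fun k _ => hlg k,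
      Finset.sum_sub_distrib]
    linarith [h1.2, h2.1]
  linarith

lemma theta_agree_le {nbr : K → Finset V} {f : K → (∀ i, A i) → ℝ}
    (hloc : ∀ k (σ τ : ∀ i, A i), (∀ i ∈ nbr k, σ i = τ i) → f k σ = f k τ)
    {θ : K → ℝ} {γ : ℝ}
    (hγ : ∀ (j : V) (σ : ∀ l, A l), |∑ k ∈ Kat' nbr j, θ k * locg A f j k σ| ≤ γ)
    (s : Finset V) :
    ∀ (σ σ' : ∀ l, A l), (∀ l, l ∉ s → σ' l = σ l) →
      ∑ k, θ k * f k σ' ≤ 2*γ*s.card + ∑ k, θ k * f k σ := by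
  induction s using Finset.induction_on with
  | empty =>
    intro σ σ' h
    have : σ' = σ := funext fun l => h l (Finset.notMem_empty l)
    subst this; simp
  | @insert j s hjs ih =>
    intro σ σ' h
    set σ'' := Function.update σ' j (σ j) with hσ''
    have hag : ∀ l, l ∉ s → σ'' l = σ l := by
      intro l hl
      by_cases hlj : l = j
      · subst hlj; simp [hσ'']
      · rw [hσ'', Function.update_of_ne hlj]
        exact h l (by simp [hlj, hl])
    have hih := ih σ σ'' hag
    have hstep : ∑ k, θ k * f k σ' ≤ 2*γ + ∑ k, θ k * f k σ'' := by
      have : σ' = Function.update σ'' j (σ' j) := by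
        funext l
        by_cases hlj : l = j
        · subst hlj; simp
        · rw [Function.update_of_ne hlj, hσ'', Function.update_of_ne hlj]
      calc ∑ k, θ k * f k σ' = ∑ k, θ k * f k (Function.update σ'' j (σ' j)) := by rw [← this]
        _ ≤ 2*γ + ∑ k, θ k * f k σ'' := theta_update_le hloc hγ σ'' j (σ' j)
    rw [Finset.card_insert_of_notMem hjs]
    push_cast
    linarith

/-- the constrained square-sum depends only on `σ i` when `F` is local to `c` -/
lemma SR_local_dep {c : Finset V} {i : V} (hi : i ∈ c) (F : (∀ l, A l) → ℝ)
    (hF : ∀ σ₁ σ₂, (∀ l ∈ c, σ₁ l = σ₂ l) → F σ₁ = F σ₂)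
    (σ ς : ∀ l, A l) (hσς : σ i = ς i) :
    (∑ σ' : ∀ l, A l, if (∀ l, l ∉ c.erase i → σ' l = σ l) then F σ' else 0)
    = ∑ σ' : ∀ l, A l, if (∀ l, l ∉ c.erase i → σ' l = ς l) then F σ' else 0 := by
  rw [← Finset.sum_filter, ← Finset.sum_filter]
  refine Finset.sum_bij' (fun σ' _ => fun l => if l ∈ c.erase i then σ' l else ς l)
    (fun σ' _ => fun l => if l ∈ c.erase i then σ' l else σ l) ?_ ?_ ?_ ?_ ?_
  · intro σ' _
    simp only [Finset.mem_filter, Finset.mem_univ, true_and]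
    intro l hl
    rw [if_neg hl]
  · intro σ' _
    simp only [Finset.mem_filter, Finset.mem_univ, true_and]
    intro l hl
    rw [if_neg hl]
  · intro σ' hσ'
    simp only [Finset.mem_filter, Finset.mem_univ, true_and] at hσ'
    funext l
    by_cases hl : l ∈ c.erase i
    · simp [hl]
    · simp only [hl, if_neg, dite_eq_ite, if_false]
      exact (hσ' l hl).symm
  · intro σ' hσ'
    simp only [Finset.mem_filter, Finset.mem_univ, true_and] at hσ'
    funext l
    by_cases hl : l ∈ c.erase i
    · simp [hl]
    · simp only [hl, if_false]
      exact (hσ' l hl).symm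
  · intro σ' hσ'
    simp only [Finset.mem_filter, Finset.mem_univ, true_and] at hσ'
    refine hF _ _ fun l hl => ?_
    show σ' l = if l ∈ c.erase i then σ' l else ς l
    by_cases hli : l ∈ c.erase i
    · rw [if_pos hli]
    · have hl' : l = i := by
        by_contra hne
        exact hli (Finset.mem_erase.mpr ⟨hne, hl⟩)
      subst hl'
      rw [if_neg hli, hσ' l hli, hσς]
end Aux4

lemma sum_ite_sum_swap {ι α : Type*} [Fintype α] (P : α → Prop) [DecidablePred P]
    (s : Finset ι) (g : ι → α → ℝ) :
    (∑ a : α, if P a then ∑ t ∈ s, g t a else 0) = ∑ t ∈ s, ∑ a : α, if P a then g t a else 0 := by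
  rw [← Finset.sum_comm]
  refine Finset.sum_congr rfl fun a _ => ?_
  by_cases h : P a <;> simp [h]

lemma sum_ite_mul_const {α : Type*} [Fintype α] (P : α → Prop) [DecidablePred P]
    (cst : ℝ) (g : α → ℝ) :
    (∑ a : α, if P a then cst * g a else 0) = cst * ∑ a : α, if P a then g a else 0 := by
  rw [Finset.mul_sum]
  refine Finset.sum_congr rfl fun a _ => ?_
  by_cases h : P a <;> simp [h]

/-- Proposition 3 (LLC in ℓ_{∞,2}-norm from nonsingular parametrization of cliques):
if the NPC condition holds with constant `ρ > 0` on the perturbation set `X_i`, then for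
every `x ∈ X_i` and every maximal clique `c ∋ i`,
`E_μ[(Σ_{k∈K_i} x_k g_{ik}(σ))²] ≥ ρ (e^{−2γ}/q)^{L−1} Σ_{k∈span(c)} x_k²`
(i.e. the LLC holds in the ℓ_{∞,2}-norm over maximal cliques containing `i`). -/
theorem llc_linf2_from_npc
    {V : Type*} [Fintype V] [DecidableEq V]
    (A : V → Type*) [∀ i, Fintype (A i)] [∀ i, Nonempty (A i)] [∀ i, DecidableEq (A i)]
    {K : Type*} [Fintype K]
    (nbr : K → Finset V) (f : K → (∀ i, A i) → ℝ)
    (hloc : ∀ k (σ τ : ∀ i, A i), (∀ i ∈ nbr k, σ i = τ i) → f k σ = f k τ)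
    (θ : K → ℝ) (γ : ℝ)
    (hγ : ∀ (j : V) (σ : ∀ l, A l), |∑ k ∈ Kat nbr j, θ k * locg A f j k σ| ≤ γ)
    (μ : (∀ j, A j) → ℝ)
    (hμ : ∀ σ, μ σ =
      Real.exp (∑ k, θ k * f k σ) / ∑ τ : ∀ j, A j, Real.exp (∑ k, θ k * f k τ))
    (i : V)
    (hg : ∀ k ∈ Kat nbr i, ∀ σ : ∀ j, A j, |locg A f i k σ| ≤ 1)
    (q L : ℕ) (hq : ∀ j, Fintype.card (A j) ≤ q) (hL1 : 1 ≤ L)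
    (hL : ∀ k, (nbr k).card ≤ L)
    (Xi : Set (K → ℝ)) (ρ : ℝ) (hρ : 0 < ρ)
    (hNPC : ∀ c ∈ MaxCli nbr, i ∈ c → ∀ x ∈ Xi,
      ∑ a : A i, (∑ σ : ∀ j, A j, if σ i = a then μ σ else 0) *
        ∑ τ : ∀ j : {v // v ∈ c.erase i}, A j.1,
          (∑ k ∈ cspan nbr c, x k * globh A nbr f k
            (Function.update
              (assignOn (c.erase i) τ (fun j => Classical.arbitrary (A j))) i a)) ^ 2 ≥
        ρ * ∑ k ∈ cspan nbr c, x k ^ 2) :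
    ∀ x ∈ Xi, ∀ c ∈ MaxCli nbr, i ∈ c →
      ∑ σ : ∀ j, A j, μ σ * (∑ k ∈ Kat nbr i, x k * locg A f i k σ) ^ 2 ≥
        ρ * (Real.exp (-(2 * γ)) / (q : ℝ)) ^ (L - 1) * ∑ k ∈ cspan nbr c, x k ^ 2 := by
    classical
  intro x hx c hc hic
  obtain ⟨k₀, hk₀f, hk₀c⟩ := Finset.mem_image.mp hc
  have hk₀max : ¬ ∃ k', nbr k₀ ⊂ nbr k' := (Finset.mem_filter.mp hk₀f).2
  have hcmax : ∀ k'', ¬ (c ⊂ nbr k'') := fun k'' hlt => hk₀max ⟨k'', hk₀c ▸ hlt⟩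
  have hic' : i ∉ c.erase i := Finset.notMem_erase i c
  have hc'c : c.erase i ⊆ c := Finset.erase_subset i c
  have hspanKat : cspan nbr c ⊆ Kat nbr i := by
    intro k hk
    rcases Finset.mem_filter.mp hk with ⟨_, hkc⟩
    exact Finset.mem_filter.mpr ⟨Finset.mem_univ _, by rw [hkc]; exact hic⟩
  set G : (∀ j, A j) → ℝ := fun σ => ∑ k ∈ Kat nbr i, x k * locg A f i k σ with hG
  set H : (∀ j, A j) → ℝ := fun σ => ∑ k ∈ cspan nbr c, x k * globh A nbr f k σ with hH
  set N : ℝ := (Fintype.card (∀ l : {v // v ∈ c.erase i}, A l.1) : ℝ) with hNdef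
  set σdef : ∀ j, A j := fun j => Classical.arbitrary (A j) with hσdef
  set W : A i → ℝ := fun a => ∑ σ' : ∀ j, A j,
    if (∀ l, l ∉ c.erase i → σ' l = Function.update σdef i a l) then H σ' ^ 2 else 0 with hW
  set ν : (∀ j, A j) → ℝ := fun σ => ∑ σ'' : ∀ j, A j,
    if (∀ l, l ∉ c.erase i → σ'' l = σ l) then μ σ'' else 0 with hν
  set Tx : ℝ := ∑ k ∈ cspan nbr c, x k ^ 2 with hTx
  -- basic positivity
  have hZpos : (0:ℝ) < ∑ τ : ∀ j, A j, Real.exp (∑ k, θ k * f k τ) :=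
    Finset.sum_pos (fun τ _ => Real.exp_pos _) Finset.univ_nonempty
  have hμnn : ∀ σ : ∀ j, A j, 0 ≤ μ σ := fun σ => by
    rw [hμ σ]; positivity
  have hγ0 : 0 ≤ γ := le_trans (abs_nonneg _) (hγ i σdef)
  have hq1 : (1:ℝ) ≤ (q:ℝ) := by
    have h1 := Fintype.card_pos (α := A i)
    have h2 := hq i
    exact_mod_cast le_trans h1 h2
  have hNpos : (0:ℝ) < N := by
    rw [hNdef]
    have : 0 < Fintype.card (∀ l : {v // v ∈ c.erase i}, A l.1) := Fintype.card_pos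
    exact_mod_cast this
  -- counting
  have hcount : ∀ σ : ∀ j, A j,
      (∑ σ' : ∀ j, A j, if (∀ l, l ∉ c.erase i → σ' l = σ l) then (1:ℝ) else 0) = N :=
    fun σ => SR_count (c.erase i) σ
  -- double-sum identity
  have hI1 : ∀ Y : (∀ j, A j) → ℝ,
      ∑ σ : ∀ j, A j, ∑ σ' : ∀ j, A j,
        (if (∀ l, l ∉ c.erase i → σ' l = σ l) then Y σ' else 0)
        = N * ∑ σ' : ∀ j, A j, Y σ' := by
    intro Y
    rw [Finset.sum_comm]
    have hper : ∀ σ' : ∀ j, A j,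
        ∑ σ : ∀ j, A j, (if (∀ l, l ∉ c.erase i → σ' l = σ l) then Y σ' else 0)
          = Y σ' * N := by
      intro σ'
      have h1 : ∀ σ : ∀ j, A j, (if (∀ l, l ∉ c.erase i → σ' l = σ l) then Y σ' else 0)
          = Y σ' * (if (∀ l, l ∉ c.erase i → σ l = σ' l) then (1:ℝ) else 0) := by
        intro σ
        have hiff : (∀ l, l ∉ c.erase i → σ' l = σ l) ↔
            (∀ l, l ∉ c.erase i → σ l = σ' l) :=
          ⟨fun h l hl => (h l hl).symm, fun h l hl => (h l hl).symm⟩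
        by_cases h : (∀ l, l ∉ c.erase i → σ' l = σ l)
        · rw [if_pos h, if_pos (hiff.mp h), mul_one]
        · rw [if_neg h, if_neg (fun h' => h (hiff.mpr h')), mul_zero]
      rw [Finset.sum_congr rfl fun σ _ => h1 σ, ← Finset.mul_sum, hcount σ']
    rw [Finset.sum_congr rfl fun σ' _ => hper σ', ← Finset.sum_mul, mul_comm]
  -- measure ratio
  have hμratio : ∀ σ' σ'' : ∀ j, A j, (∀ l, l ∉ c.erase i → σ'' l = σ' l) →
      μ σ'' ≤ Real.exp (2*γ*(c.erase i).card) * μ σ' := by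
    intro σ' σ'' hagree
    have h1 := theta_agree_le (A := A) hloc (θ := θ) (γ := γ)
      (fun j σ => hγ j σ) (c.erase i) σ' σ'' hagree
    have h2 : Real.exp (∑ k, θ k * f k σ'') ≤
        Real.exp (2*γ*(c.erase i).card) * Real.exp (∑ k, θ k * f k σ') := by
      rw [← Real.exp_add]
      exact Real.exp_le_exp.mpr (by linarith)
    rw [hμ σ', hμ σ'']
    rw [div_le_iff₀ hZpos] at *
    calc Real.exp (∑ k, θ k * f k σ'')
        ≤ Real.exp (2*γ*(c.erase i).card) * Real.exp (∑ k, θ k * f k σ') := h2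
      _ = Real.exp (2*γ*(c.erase i).card) *
          (Real.exp (∑ k, θ k * f k σ') / (∑ τ : ∀ j, A j, Real.exp (∑ k, θ k * f k τ)) *
            (∑ τ : ∀ j, A j, Real.exp (∑ k, θ k * f k τ))) := by
          rw [div_mul_cancel₀]
          exact hZpos.ne'
      _ = Real.exp (2*γ*(c.erase i).card) *
          (Real.exp (∑ k, θ k * f k σ') / (∑ τ : ∀ j, A j, Real.exp (∑ k, θ k * f k τ))) *
          (∑ τ : ∀ j, A j, Real.exp (∑ k, θ k * f k τ)) := by ring
  -- locality of H
  have hHloc : ∀ σ₁ σ₂ : ∀ j, A j, (∀ l ∈ c, σ₁ l = σ₂ l) → H σ₁ = H σ₂ := by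
    intro σ₁ σ₂ h
    rw [hH]
    refine Finset.sum_congr rfl fun k hk => ?_
    have hkc : nbr k = c := (Finset.mem_filter.mp hk).2
    rw [globh_local hloc k σ₁ σ₂ (by rw [hkc]; exact h)]
  -- the constrained H² sum depends only on σ i
  have hWs : ∀ σ : ∀ j, A j,
      (∑ σ' : ∀ j, A j, if (∀ l, l ∉ c.erase i → σ' l = σ l) then H σ' ^ 2 else 0)
        = W (σ i) := by
    intro σ
    exact SR_local_dep (A := A) hic (fun σ' => H σ' ^ 2)
      (fun σ₁ σ₂ h => by rw [hHloc σ₁ σ₂ h])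
      σ (Function.update σdef i (σ i)) (by simp)
  -- NPC in W form
  have hNPCW : ∑ a : A i, (∑ σ : ∀ j, A j, if σ i = a then μ σ else 0) * W a ≥ ρ * Tx := by
    have h := hNPC c hc hic x hx
    rw [hTx]
    have hconv : ∀ a : A i,
        (∑ τ : ∀ j : {v // v ∈ c.erase i}, A j.1,
          (∑ k ∈ cspan nbr c, x k * globh A nbr f k
            (Function.update (assignOn (c.erase i) τ (fun j => Classical.arbitrary (A j)))
              i a)) ^ 2) = W a := by
      intro a
      have hupd : ∀ τ : ∀ j : {v // v ∈ c.erase i}, A j.1,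
          Function.update (assignOn (c.erase i) τ (fun j => Classical.arbitrary (A j))) i a
            = assignOn (c.erase i) τ (Function.update σdef i a) := by
        intro τ
        funext l
        by_cases hl : l = i
        · subst hl
          simp [assignOn, Finset.notMem_erase l c]
        · by_cases hlr : l ∈ c.erase i
          · simp [assignOn, hlr, Function.update_of_ne hl]
          · simp [assignOn, hlr, Function.update_of_ne hl, hσdef]
      have hsa := sum_assignOn (A := A) (c.erase i) (Function.update σdef i a)
        (fun σ' => H σ' ^ 2)
      simp only [SR] at hsa
      calc (∑ τ : ∀ j : {v // v ∈ c.erase i}, A j.1,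
          (∑ k ∈ cspan nbr c, x k * globh A nbr f k
            (Function.update (assignOn (c.erase i) τ (fun j => Classical.arbitrary (A j)))
              i a)) ^ 2)
          = ∑ τ : ∀ j : {v // v ∈ c.erase i}, A j.1,
              H (assignOn (c.erase i) τ (Function.update σdef i a)) ^ 2 := by
            refine Finset.sum_congr rfl fun τ _ => ?_
            rw [hupd τ, hH]
        _ = W a := by rw [hsa, hW]
    refine le_trans h (le_of_eq ?_)
    refine Finset.sum_congr rfl fun a _ => ?_
    rw [hconv a]
  -- orthogonality
  have hinner0 : ∀ k ∈ cspan nbr c, ∀ σ : ∀ j, A j,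
      (∑ σ' : ∀ j, A j, if (∀ l, l ∉ c.erase i → σ' l = σ l)
        then (G σ' - H σ') * globh A nbr f k σ' else 0) = 0 := by
    intro k hk σ
    have hkc : nbr k = c := (Finset.mem_filter.mp hk).2
    have hGH : ∀ σ' : ∀ j, A j, G σ' - H σ' =
        (∑ k' ∈ Kat nbr i \ cspan nbr c, x k' * locg A f i k' σ')
        + ∑ k' ∈ cspan nbr c, x k' * (locg A f i k' σ' - globh A nbr f k' σ') := by
      intro σ'
      rw [hG, hH]
      dsimp only
      rw [← Finset.sum_sdiff hspanKat (f := fun k' => x k' * locg A f i k' σ')]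
      rw [add_sub_assoc, ← Finset.sum_sub_distrib]
      congr 1
      exact Finset.sum_congr rfl fun t _ => by ring
    have hexp : ∀ σ' : ∀ j, A j, (G σ' - H σ') * globh A nbr f k σ'
        = (∑ k' ∈ Kat nbr i \ cspan nbr c,
              x k' * (locg A f i k' σ' * globh A nbr f k σ'))
          + ∑ k' ∈ cspan nbr c,
              x k' * ((locg A f i k' σ' - globh A nbr f k' σ') * globh A nbr f k σ') := by
      intro σ'
      rw [hGH σ', add_mul, Finset.sum_mul, Finset.sum_mul]
      congr 1 <;> exact Finset.sum_congr rfl fun t _ => by ring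
    have hpartA : (∑ σ' : ∀ j, A j, if (∀ l, l ∉ c.erase i → σ' l = σ l) then
        (∑ k' ∈ Kat nbr i \ cspan nbr c,
          x k' * (locg A f i k' σ' * globh A nbr f k σ')) else 0) = 0 := by
      rw [sum_ite_sum_swap]
      refine Finset.sum_eq_zero fun k' hk' => ?_
      rw [sum_ite_mul_const (fun σ' : ∀ j, A j => (∀ l, l ∉ c.erase i → σ' l = σ l))
        (x k') (fun σ' => locg A f i k' σ' * globh A nbr f k σ')]
      have hik' : i ∈ nbr k' := by
        have := (Finset.mem_sdiff.mp hk').1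
        exact (Finset.mem_filter.mp this).2
      have hcsub : ¬ (c.erase i ⊆ nbr k') := by
        intro hsub
        have hcsub' : c ⊆ nbr k' := by
          intro l hl
          by_cases hli : l = i
          · subst hli; exact hik'
          · exact hsub (Finset.mem_erase.mpr ⟨hli, hl⟩)
        have hne : nbr k' = c := by
          rcases lt_or_eq_of_le hcsub' with hlt | heq
          · exact absurd hlt (hcmax k')
          · exact heq.symm
        have hmf : k' ∈ MaxFac nbr := Finset.mem_filter.mpr ⟨Finset.mem_univ _, by
          rintro ⟨k'', hk''⟩
          rw [hne] at hk''
          exact hcmax k'' hk''⟩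
        exact (Finset.mem_sdiff.mp hk').2 (Finset.mem_filter.mpr ⟨hmf, hne⟩)
      obtain ⟨j, hjc', hjnk'⟩ := Finset.not_subset.mp hcsub
      have hu : ∀ (ς : ∀ j, A j) (b : A j),
          locg A f i k' (Function.update ς j b) = locg A f i k' ς := by
        intro ς b
        rw [locg, locg]
        have h1 : f k' (Function.update ς j b) = f k' ς :=
          hloc k' _ _ fun l hl => Function.update_of_ne (by rintro rfl; exact hjnk' hl) _ _
        have h2 : ∀ a : A i, f k' (Function.update (Function.update ς j b) i a)
            = f k' (Function.update ς i a) := by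
          intro a
          refine hloc k' _ _ fun l hl => ?_
          by_cases hli : l = i
          · subst hli; simp
          · have hlj : l ≠ j := by rintro rfl; exact hjnk' hl
            rw [Function.update_of_ne hli, Function.update_of_ne hlj,
              Function.update_of_ne hli]
        rw [h1, Finset.sum_congr rfl fun a _ => h2 a]
      rw [SR_orth hjc' (by rw [hkc]; exact hc'c hjc') _ hu σ, mul_zero]
    have hpartB : (∑ σ' : ∀ j, A j, if (∀ l, l ∉ c.erase i → σ' l = σ l) then
        (∑ k' ∈ cspan nbr c,
          x k' * ((locg A f i k' σ' - globh A nbr f k' σ') * globh A nbr f k σ')) else 0)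
        = 0 := by
      rw [sum_ite_sum_swap]
      refine Finset.sum_eq_zero fun k' hk' => ?_
      rw [sum_ite_mul_const (fun σ' : ∀ j, A j => (∀ l, l ∉ c.erase i → σ' l = σ l))
        (x k') (fun σ' => (locg A f i k' σ' - globh A nbr f k' σ') * globh A nbr f k σ')]
      have hk'c : nbr k' = c := (Finset.mem_filter.mp hk').2
      have hdiff : ∀ σ' : ∀ j, A j, locg A f i k' σ' - globh A nbr f k' σ'
          = -∑ r ∈ ((c.powerset).erase ∅).erase {i},
              coefR (A := A) r * SR r (f k') σ' := by
        intro σ'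
        rw [locg_eq (A := A) f i k' σ', globh_eq_sum_SR (A := A) nbr f k' σ', hk'c]
        rw [← Finset.add_sum_erase _ _ (Finset.empty_mem_powerset c)]
        rw [← Finset.add_sum_erase _
          (fun r => coefR (A := A) r * SR r (f k') σ')
          (Finset.mem_erase.mpr ⟨Finset.singleton_ne_empty i,
            Finset.mem_powerset.mpr (Finset.singleton_subset_iff.mpr hic)⟩)]
        have hcoef0 : coefR (A := A) (∅ : Finset V) * SR ∅ (f k') σ' = f k' σ' := by
          simp [coefR, SR_empty]
        rw [hcoef0]
        ring
      have hterm : ∀ σ' : ∀ j, A j,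
          (locg A f i k' σ' - globh A nbr f k' σ') * globh A nbr f k σ'
          = ∑ r ∈ ((c.powerset).erase ∅).erase {i},
              (-coefR (A := A) r) * (SR r (f k') σ' * globh A nbr f k σ') := by
        intro σ'
        rw [hdiff σ', neg_mul, Finset.sum_mul, ← Finset.sum_neg_distrib]
        exact Finset.sum_congr rfl fun r _ => by ring
      have hstep : (∑ σ' : ∀ j, A j, if (∀ l, l ∉ c.erase i → σ' l = σ l) then
          (locg A f i k' σ' - globh A nbr f k' σ') * globh A nbr f k σ' else 0)
          = ∑ σ' : ∀ j, A j, if (∀ l, l ∉ c.erase i → σ' l = σ l) then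
              (∑ r ∈ ((c.powerset).erase ∅).erase {i},
                (-coefR (A := A) r) * (SR r (f k') σ' * globh A nbr f k σ')) else 0 := by
        refine Finset.sum_congr rfl fun σ' _ => ?_
        by_cases hcond : (∀ l, l ∉ c.erase i → σ' l = σ l)
        · rw [if_pos hcond, if_pos hcond, hterm σ']
        · rw [if_neg hcond, if_neg hcond]
      rw [hstep, sum_ite_sum_swap]
      rw [Finset.sum_eq_zero, mul_zero]
      intro r hr
      have hrne : r ≠ {i} := (Finset.mem_erase.mp hr).1
      have hr2 := Finset.mem_erase.mp (Finset.mem_erase.mp hr).2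
      have hrne0 : r ≠ ∅ := hr2.1
      have hrc : r ⊆ c := Finset.mem_powerset.mp hr2.2
      have hjex : ∃ j ∈ r, j ≠ i := by
        by_contra hcon
        push_neg at hcon
        have : r ⊆ {i} := fun j hj => Finset.mem_singleton.mpr (hcon j hj)
        rcases Finset.subset_singleton_iff.mp this with h0 | h1
        · exact hrne0 h0
        · exact hrne h1
      obtain ⟨j, hjr, hji⟩ := hjex
      rw [sum_ite_mul_const (fun σ' : ∀ j, A j => (∀ l, l ∉ c.erase i → σ' l = σ l))
        (-coefR (A := A) r) (fun σ' => SR r (f k') σ' * globh A nbr f k σ')]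
      rw [SR_orth (Finset.mem_erase.mpr ⟨hji, hrc hjr⟩)
        (by rw [hkc]; exact hrc hjr) _ (fun ς b => SR_update_mem hjr (f k') ς b) σ,
        mul_zero]
    have hsum_eq : (∑ σ' : ∀ j, A j, if (∀ l, l ∉ c.erase i → σ' l = σ l)
          then (G σ' - H σ') * globh A nbr f k σ' else 0)
        = (∑ σ' : ∀ j, A j, if (∀ l, l ∉ c.erase i → σ' l = σ l) then
            (∑ k' ∈ Kat nbr i \ cspan nbr c,
              x k' * (locg A f i k' σ' * globh A nbr f k σ')) else 0)
          + ∑ σ' : ∀ j, A j, if (∀ l, l ∉ c.erase i → σ' l = σ l) then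
              (∑ k' ∈ cspan nbr c,
                x k' * ((locg A f i k' σ' - globh A nbr f k' σ') * globh A nbr f k σ')) else 0 := by
      rw [← Finset.sum_add_distrib]
      refine Finset.sum_congr rfl fun σ' _ => ?_
      by_cases hcond : (∀ l, l ∉ c.erase i → σ' l = σ l)
      · rw [if_pos hcond, if_pos hcond, if_pos hcond, hexp σ']
      · rw [if_neg hcond, if_neg hcond, if_neg hcond, add_zero]
    rw [hsum_eq, hpartA, hpartB, add_zero]
  -- Bessel
  have hBessel : ∀ σ : ∀ j, A j,
      (∑ σ' : ∀ j, A j, if (∀ l, l ∉ c.erase i → σ' l = σ l) then H σ' ^ 2 else 0)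
      ≤ ∑ σ' : ∀ j, A j, if (∀ l, l ∉ c.erase i → σ' l = σ l) then G σ' ^ 2 else 0 := by
    intro σ
    have horth : (∑ σ' : ∀ j, A j, if (∀ l, l ∉ c.erase i → σ' l = σ l) then
        (G σ' - H σ') * H σ' else 0) = 0 := by
      have hHexpand : ∀ σ' : ∀ j, A j, (G σ' - H σ') * H σ'
          = ∑ k ∈ cspan nbr c, x k * ((G σ' - H σ') * globh A nbr f k σ') := by
        intro σ'
        rw [hH]
        dsimp only
        rw [Finset.mul_sum]
        exact Finset.sum_congr rfl fun k _ => by ring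
      have h1 : (∑ σ' : ∀ j, A j, if (∀ l, l ∉ c.erase i → σ' l = σ l) then
          (G σ' - H σ') * H σ' else 0)
          = ∑ σ' : ∀ j, A j, if (∀ l, l ∉ c.erase i → σ' l = σ l) then
              (∑ k ∈ cspan nbr c, x k * ((G σ' - H σ') * globh A nbr f k σ')) else 0 := by
        refine Finset.sum_congr rfl fun σ' _ => ?_
        by_cases hcond : (∀ l, l ∉ c.erase i → σ' l = σ l)
        · rw [if_pos hcond, if_pos hcond, hHexpand σ']
        · rw [if_neg hcond, if_neg hcond]
      rw [h1, sum_ite_sum_swap]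
      refine Finset.sum_eq_zero fun k hk => ?_
      rw [sum_ite_mul_const (fun σ' : ∀ j, A j => (∀ l, l ∉ c.erase i → σ' l = σ l))
        (x k) (fun σ' => (G σ' - H σ') * globh A nbr f k σ'), hinner0 k hk σ, mul_zero]
    have hsplit : (∑ σ' : ∀ j, A j, if (∀ l, l ∉ c.erase i → σ' l = σ l) then G σ' ^ 2 else 0)
        = (∑ σ' : ∀ j, A j, if (∀ l, l ∉ c.erase i → σ' l = σ l) then (G σ' - H σ') ^ 2 else 0)
          + 2 * (∑ σ' : ∀ j, A j, if (∀ l, l ∉ c.erase i → σ' l = σ l) then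
              (G σ' - H σ') * H σ' else 0)
          + ∑ σ' : ∀ j, A j, if (∀ l, l ∉ c.erase i → σ' l = σ l) then H σ' ^ 2 else 0 := by
      rw [Finset.mul_sum, ← Finset.sum_add_distrib, ← Finset.sum_add_distrib]
      refine Finset.sum_congr rfl fun σ' _ => ?_
      by_cases hcond : (∀ l, l ∉ c.erase i → σ' l = σ l)
      · rw [if_pos hcond, if_pos hcond, if_pos hcond, if_pos hcond]
        ring
      · rw [if_neg hcond, if_neg hcond, if_neg hcond, if_neg hcond]
        ring
    have hnn : (0:ℝ) ≤ ∑ σ' : ∀ j, A j, if (∀ l, l ∉ c.erase i → σ' l = σ l) then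
        (G σ' - H σ') ^ 2 else 0 :=
      Finset.sum_nonneg fun σ' _ => by positivity
    rw [hsplit, horth]
    linarith
  -- ν facts
  have hνnn : ∀ σ : ∀ j, A j, 0 ≤ ν σ := fun σ =>
    Finset.sum_nonneg fun σ'' _ => by
      by_cases h : (∀ l, l ∉ c.erase i → σ'' l = σ l)
      · rw [if_pos h]; exact hμnn σ''
      · rw [if_neg h]
  have hνle : ∀ σ σ' : ∀ j, A j, (∀ l, l ∉ c.erase i → σ' l = σ l) →
      ν σ ≤ Real.exp (2*γ*(c.erase i).card) * N * μ σ' := by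
    intro σ σ' hag
    have hper : ∀ σ'' : ∀ j, A j,
        (if (∀ l, l ∉ c.erase i → σ'' l = σ l) then μ σ'' else 0)
        ≤ (if (∀ l, l ∉ c.erase i → σ'' l = σ l) then
            Real.exp (2*γ*(c.erase i).card) * μ σ' else 0) := by
      intro σ''
      by_cases h : (∀ l, l ∉ c.erase i → σ'' l = σ l)
      · rw [if_pos h, if_pos h]
        exact hμratio σ' σ'' (fun l hl => (h l hl).trans (hag l hl).symm)
      · rw [if_neg h, if_neg h]
    calc ν σ ≤ ∑ σ'' : ∀ j, A j, (if (∀ l, l ∉ c.erase i → σ'' l = σ l) then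
          Real.exp (2*γ*(c.erase i).card) * μ σ' else 0) := Finset.sum_le_sum fun σ'' _ => hper σ''
      _ = (Real.exp (2*γ*(c.erase i).card) * μ σ') * N := by
          rw [Finset.sum_congr rfl fun σ'' _ => show
            (if (∀ l, l ∉ c.erase i → σ'' l = σ l) then
              Real.exp (2*γ*(c.erase i).card) * μ σ' else 0)
            = (Real.exp (2*γ*(c.erase i).card) * μ σ') *
              (if (∀ l, l ∉ c.erase i → σ'' l = σ l) then (1:ℝ) else 0) from by
            by_cases h : (∀ l, l ∉ c.erase i → σ'' l = σ l) <;> simp [h]]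
          rw [← Finset.mul_sum, hcount σ]
      _ = Real.exp (2*γ*(c.erase i).card) * N * μ σ' := by ring
  have hkey : ∀ σ σ' : ∀ j, A j, (∀ l, l ∉ c.erase i → σ' l = σ l) →
      (Real.exp (-(2*γ*(c.erase i).card)) / N) * ν σ ≤ μ σ' := by
    intro σ σ' hag
    have h := hνle σ σ' hag
    have hepos : (0:ℝ) < Real.exp (2*γ*(c.erase i).card) := Real.exp_pos _
    rw [Real.exp_neg]
    calc (Real.exp (2*γ*(c.erase i).card))⁻¹ / N * ν σ
        ≤ (Real.exp (2*γ*(c.erase i).card))⁻¹ / N *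
            (Real.exp (2*γ*(c.erase i).card) * N * μ σ') := by
          exact mul_le_mul_of_nonneg_left h (by positivity)
      _ = μ σ' := by field_simp
  -- main chain
  have hTxnn : (0:ℝ) ≤ Tx := by rw [hTx]; positivity
  have hEexp : Real.exp (-(2*γ*(c.erase i).card)) / N ≥ 0 := by positivity
  have hmain : N * (∑ σ : ∀ j, A j, μ σ * G σ ^ 2)
      ≥ Real.exp (-(2*γ*(c.erase i).card)) * (ρ * Tx) := by
    have h1 : N * (∑ σ : ∀ j, A j, μ σ * G σ ^ 2)
        = ∑ σ : ∀ j, A j, ∑ σ' : ∀ j, A j,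
            (if (∀ l, l ∉ c.erase i → σ' l = σ l) then μ σ' * G σ' ^ 2 else 0) :=
      (hI1 (fun σ' => μ σ' * G σ' ^ 2)).symm
    have h2 : (∑ σ : ∀ j, A j, ∑ σ' : ∀ j, A j,
          (if (∀ l, l ∉ c.erase i → σ' l = σ l) then μ σ' * G σ' ^ 2 else 0))
        ≥ ∑ σ : ∀ j, A j, ∑ σ' : ∀ j, A j,
            (if (∀ l, l ∉ c.erase i → σ' l = σ l) then
              ((Real.exp (-(2*γ*(c.erase i).card)) / N * ν σ) * G σ' ^ 2) else 0) := by
      refine Finset.sum_le_sum fun σ _ => Finset.sum_le_sum fun σ' _ => ?_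
      by_cases h : (∀ l, l ∉ c.erase i → σ' l = σ l)
      · rw [if_pos h, if_pos h]
        exact mul_le_mul_of_nonneg_right (hkey σ σ' h) (sq_nonneg _)
      · rw [if_neg h, if_neg h]
    have h3 : (∑ σ : ∀ j, A j, ∑ σ' : ∀ j, A j,
          (if (∀ l, l ∉ c.erase i → σ' l = σ l) then
            ((Real.exp (-(2*γ*(c.erase i).card)) / N * ν σ) * G σ' ^ 2) else 0))
        = (Real.exp (-(2*γ*(c.erase i).card)) / N) *
            ∑ σ : ∀ j, A j, ν σ *
              (∑ σ' : ∀ j, A j, if (∀ l, l ∉ c.erase i → σ' l = σ l) then G σ' ^ 2 else 0) := by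
      rw [Finset.mul_sum]
      refine Finset.sum_congr rfl fun σ _ => ?_
      rw [sum_ite_mul_const (fun σ' : ∀ j, A j => (∀ l, l ∉ c.erase i → σ' l = σ l))
        (Real.exp (-(2*γ*(c.erase i).card)) / N * ν σ) (fun σ' => G σ' ^ 2)]
      ring
    have h4 : (∑ σ : ∀ j, A j, ν σ *
          (∑ σ' : ∀ j, A j, if (∀ l, l ∉ c.erase i → σ' l = σ l) then G σ' ^ 2 else 0))
        ≥ ∑ σ : ∀ j, A j, ν σ *
            (∑ σ' : ∀ j, A j, if (∀ l, l ∉ c.erase i → σ' l = σ l) then H σ' ^ 2 else 0) :=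
      Finset.sum_le_sum fun σ _ => mul_le_mul_of_nonneg_left (hBessel σ) (hνnn σ)
    have h5 : (∑ σ : ∀ j, A j, ν σ *
          (∑ σ' : ∀ j, A j, if (∀ l, l ∉ c.erase i → σ' l = σ l) then H σ' ^ 2 else 0))
        = ∑ σ : ∀ j, A j, ∑ σ'' : ∀ j, A j,
            (if (∀ l, l ∉ c.erase i → σ'' l = σ l) then μ σ'' * W (σ'' i) else 0) := by
      refine Finset.sum_congr rfl fun σ _ => ?_
      rw [hWs σ, hν]
      dsimp only
      rw [Finset.sum_mul]
      refine Finset.sum_congr rfl fun σ'' _ => ?_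
      by_cases h : (∀ l, l ∉ c.erase i → σ'' l = σ l)
      · rw [if_pos h, if_pos h, h i hic']
      · rw [if_neg h, if_neg h]
        ring
    have h6 : (∑ σ : ∀ j, A j, ∑ σ'' : ∀ j, A j,
          (if (∀ l, l ∉ c.erase i → σ'' l = σ l) then μ σ'' * W (σ'' i) else 0))
        = N * ∑ σ'' : ∀ j, A j, μ σ'' * W (σ'' i) := hI1 _
    have h7 : (∑ σ'' : ∀ j, A j, μ σ'' * W (σ'' i))
        = ∑ a : A i, (∑ σ : ∀ j, A j, if σ i = a then μ σ else 0) * W a := by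
      have h1' : ∀ a : A i, (∑ σ : ∀ j, A j, if σ i = a then μ σ else 0) * W a
          = ∑ σ : ∀ j, A j, if σ i = a then μ σ * W a else 0 := by
        intro a
        rw [Finset.sum_mul]
        exact Finset.sum_congr rfl fun σ _ => by
          by_cases h : σ i = a <;> simp [h]
      rw [Finset.sum_congr rfl fun a _ => h1' a, Finset.sum_comm]
      refine Finset.sum_congr rfl fun σ _ => ?_
      rw [Finset.sum_ite_eq Finset.univ (σ i) (fun a => μ σ * W a), if_pos (Finset.mem_univ _)]
    calc N * (∑ σ : ∀ j, A j, μ σ * G σ ^ 2)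
        = ∑ σ : ∀ j, A j, ∑ σ' : ∀ j, A j,
            (if (∀ l, l ∉ c.erase i → σ' l = σ l) then μ σ' * G σ' ^ 2 else 0) := h1
      _ ≥ ∑ σ : ∀ j, A j, ∑ σ' : ∀ j, A j,
            (if (∀ l, l ∉ c.erase i → σ' l = σ l) then
              ((Real.exp (-(2*γ*(c.erase i).card)) / N * ν σ) * G σ' ^ 2) else 0) := h2
      _ = (Real.exp (-(2*γ*(c.erase i).card)) / N) *
            ∑ σ : ∀ j, A j, ν σ *
              (∑ σ' : ∀ j, A j, if (∀ l, l ∉ c.erase i → σ' l = σ l) then G σ' ^ 2 else 0) := h3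
      _ ≥ (Real.exp (-(2*γ*(c.erase i).card)) / N) *
            ∑ σ : ∀ j, A j, ν σ *
              (∑ σ' : ∀ j, A j, if (∀ l, l ∉ c.erase i → σ' l = σ l) then H σ' ^ 2 else 0) :=
        mul_le_mul_of_nonneg_left h4 hEexp
      _ = (Real.exp (-(2*γ*(c.erase i).card)) / N) *
            (N * ∑ σ'' : ∀ j, A j, μ σ'' * W (σ'' i)) := by rw [h5, h6]
      _ = (Real.exp (-(2*γ*(c.erase i).card)) / N) *
            (N * ∑ a : A i, (∑ σ : ∀ j, A j, if σ i = a then μ σ else 0) * W a) := by rw [h7]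
      _ ≥ (Real.exp (-(2*γ*(c.erase i).card)) / N) * (N * (ρ * Tx)) := by
          refine mul_le_mul_of_nonneg_left ?_ hEexp
          exact mul_le_mul_of_nonneg_left hNPCW (le_of_lt hNpos)
      _ = Real.exp (-(2*γ*(c.erase i).card)) * (ρ * Tx) := by
          field_simp
  -- conclude
  have hE : (∑ σ : ∀ j, A j, μ σ * G σ ^ 2)
      ≥ (Real.exp (-(2*γ*(c.erase i).card)) / N) * (ρ * Tx) := by
    rw [ge_iff_le, div_mul_eq_mul_div, div_le_iff₀ hNpos]
    calc Real.exp (-(2*γ*(c.erase i).card)) * (ρ * Tx)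
        ≤ N * (∑ σ : ∀ j, A j, μ σ * G σ ^ 2) := hmain
      _ = (∑ σ : ∀ j, A j, μ σ * G σ ^ 2) * N := mul_comm _ _
  -- numeric comparison
  have hqpos : (0:ℝ) < (q:ℝ) := lt_of_lt_of_le zero_lt_one hq1
  have hB0 : (0:ℝ) ≤ Real.exp (-(2*γ)) / q := by positivity
  have hB1 : Real.exp (-(2*γ)) / q ≤ 1 := by
    rw [div_le_one hqpos]
    calc Real.exp (-(2*γ)) ≤ Real.exp 0 := Real.exp_le_exp.mpr (by linarith)
      _ = 1 := Real.exp_zero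
      _ ≤ (q:ℝ) := hq1
  have hmL : (c.erase i).card ≤ L - 1 := by
    rw [Finset.card_erase_of_mem hic]
    exact Nat.sub_le_sub_right (hk₀c ▸ hL k₀) 1
  have hpow1 : (Real.exp (-(2*γ)) / q) ^ (L-1) ≤ (Real.exp (-(2*γ)) / q) ^ ((c.erase i).card) :=
    pow_le_pow_of_le_one hB0 hB1 hmL
  have hNleq : N ≤ (q:ℝ) ^ ((c.erase i).card) := by
    rw [hNdef]
    have hnat : Fintype.card (∀ l : {v // v ∈ c.erase i}, A l.1) ≤ q ^ ((c.erase i).card) := by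
      rw [Fintype.card_pi]
      calc ∏ l : {v // v ∈ c.erase i}, Fintype.card (A l.1)
          ≤ ∏ _l : {v // v ∈ c.erase i}, q :=
            Finset.prod_le_prod' fun l _ => hq l.1
        _ = q ^ (Fintype.card {v // v ∈ c.erase i}) := by
            rw [Finset.prod_const, Finset.card_univ]
        _ = q ^ ((c.erase i).card) := by rw [Fintype.card_coe]
    exact_mod_cast hnat
  have hpow2 : (Real.exp (-(2*γ)) / q) ^ ((c.erase i).card)
      ≤ Real.exp (-(2*γ*(c.erase i).card)) / N := by
    rw [div_pow]
    have hnum : Real.exp (-(2*γ)) ^ ((c.erase i).card) = Real.exp (-(2*γ*(c.erase i).card)) := by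
      rw [← Real.exp_nat_mul]
      congr 1
      ring
    rw [hnum]
    exact div_le_div_of_nonneg_left (by positivity) hNpos hNleq
  have hfinal : ρ * (Real.exp (-(2 * γ)) / (q:ℝ)) ^ (L - 1) * Tx
      ≤ ∑ σ : ∀ j, A j, μ σ * G σ ^ 2 := by
    calc ρ * (Real.exp (-(2 * γ)) / (q:ℝ)) ^ (L - 1) * Tx
        = (Real.exp (-(2 * γ)) / (q:ℝ)) ^ (L - 1) * (ρ * Tx) := by ring
      _ ≤ (Real.exp (-(2*γ*(c.erase i).card)) / N) * (ρ * Tx) := by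
          refine mul_le_mul_of_nonneg_right (hpow1.trans hpow2) ?_
          positivity
      _ ≤ ∑ σ : ∀ j, A j, μ σ * G σ ^ 2 := hE
  rw [ge_iff_le]
  calc ρ * (Real.exp (-(2 * γ)) / (q:ℝ)) ^ (L - 1) * Tx
      ≤ ∑ σ : ∀ j, A j, μ σ * G σ ^ 2 := hfinal
    _ = ∑ σ : ∀ j, A j, μ σ * (∑ k ∈ Kat nbr i, x k * locg A f i k σ) ^ 2 := by
        rw [hG]
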